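/- Let U : X → (0,∞) be measurable, let (u_n) be the Fortet scheme with pointwise limit u_*, and let x₀ ∈ X be such that p(x₀,y) > 0 for ν-almost every y and such that there exist r > 1 and c > 0 with ∫_Y (p(x,y)/p(x₀,y))^r p(x₀,y) Ψ[U](y)⁻¹ dν(y) ≤ c·U(x)^r for all x ∈ X. If Φ[u_*](x₀) = 0, then the sequence (Φ[u_n]/U) converges uniformly to 0, i.e. lim_{n→∞} sup_{x∈X} Φ[u_n](x)/U(x) = 0. -/

import Mathlib

open MeasureTheory ENNReal Filter Topology

noncomputable section

/-- `Ψ[u](y) = ∫_X p(x',y) u(x')⁻¹ dμ(x')`. -/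
def fortetPsi {X Y : Type*} [MeasurableSpace X]
    (p : X → Y → ℝ≥0∞) (μ : Measure X) (u : X → ℝ≥0∞) (y : Y) : ℝ≥0∞ :=
  ∫⁻ x, p x y * (u x)⁻¹ ∂μ

/-- The Fortet mapping `Φ[u](x) = ∫_Y p(x,y) Ψ[u](y)⁻¹ dν(y)`. -/
def fortetPhi {X Y : Type*} [MeasurableSpace X] [MeasurableSpace Y]
    (p : X → Y → ℝ≥0∞) (μ : Measure X) (ν : Measure Y) (u : X → ℝ≥0∞) (x : X) : ℝ≥0∞ :=
  ∫⁻ y, p x y * (fortetPsi p μ u y)⁻¹ ∂ν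

/-- The Fortet scheme: `fortetSeq p μ ν U n` is `u_{n+1}`, i.e. `u₁ = U` and
`u_{n+1} = max (U/(n+1)) (min (Φ[u_n]) U)`. -/
def fortetSeq {X Y : Type*} [MeasurableSpace X] [MeasurableSpace Y]
    (p : X → Y → ℝ≥0∞) (μ : Measure X) (ν : Measure Y) (U : X → ℝ≥0∞) :
    ℕ → X → ℝ≥0∞
  | 0 => U
  | n + 1 => fun x =>
      max (U x / (n + 2)) (min (fortetPhi p μ ν (fortetSeq p μ ν U n) x) (U x))

section auxlemmas

variable {X Y : Type*} [MeasurableSpace X] [MeasurableSpace Y]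
  {μ : Measure X} {ν : Measure Y} {p : X → Y → ℝ≥0∞} {U : X → ℝ≥0∞}

lemma fortetPsi_meas [SFinite μ] (hp : Measurable (Function.uncurry p))
    {u : X → ℝ≥0∞} (hu : Measurable u) : Measurable (fortetPsi p μ u) :=
  Measurable.lintegral_prod_left' (hp.mul (hu.comp measurable_fst).inv)

lemma fortetPhi_meas [SFinite μ] [SFinite ν] (hp : Measurable (Function.uncurry p))
    {u : X → ℝ≥0∞} (hu : Measurable u) : Measurable (fortetPhi p μ ν u) :=
  Measurable.lintegral_prod_right'
    (hp.mul (((fortetPsi_meas hp hu).comp measurable_snd).inv))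

end auxlemmas

theorem fortet_uniform_convergence_holder
    {X Y : Type*} [MeasurableSpace X] [MeasurableSpace Y]
    (μ : Measure X) (ν : Measure Y)
    [IsProbabilityMeasure μ] [IsProbabilityMeasure ν]
    (p : X → Y → ℝ≥0∞)
    (hp_meas : Measurable (Function.uncurry p))
    (hp_fin : ∀ x y, p x y ≠ ∞)
    (U : X → ℝ≥0∞) (hU_meas : Measurable U)
    (hU_pos : ∀ x, 0 < U x) (hU_fin : ∀ x, U x ≠ ∞)
    (ustar : X → ℝ≥0∞)
    (hustar : ∀ x, Tendsto (fun n => fortetSeq p μ ν U n x) atTop (𝓝 (ustar x)))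
    (x₀ : X) (hx₀_pos : ∀ᵐ y ∂ν, 0 < p x₀ y)
    (r : ℝ) (hr : 1 < r) (c : ℝ≥0∞) (hc_pos : 0 < c) (hc_fin : c ≠ ∞)
    (hHolder : ∀ x, (∫⁻ y, (p x y / p x₀ y) ^ r * (p x₀ y * (fortetPsi p μ U y)⁻¹) ∂ν)
      ≤ c * (U x) ^ r)
    (hx₀ : fortetPhi p μ ν ustar x₀ = 0) :
    Tendsto (fun n => ⨆ x, fortetPhi p μ ν (fortetSeq p μ ν U n) x / U x)
      atTop (𝓝 0) := by
  have hr0 : (0:ℝ) < r := lt_trans zero_lt_one hr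
  set q : ℝ := r.conjExponent with hq_def
  have hpq : r.HolderConjugate q := Real.HolderConjugate.conjExponent hr
  have hq1 : 1 < q := hpq.symm.lt
  have hq0 : (0:ℝ) < q := hpq.symm.pos
  -- basic measurability facts
  have hpy : ∀ y, Measurable fun x => p x y := fun y =>
    hp_meas.comp (measurable_prodMk_right)
  have hpx : ∀ x, Measurable (p x) := fun x =>
    hp_meas.comp (measurable_prodMk_left)
  have humeas : ∀ n, Measurable (fortetSeq p μ ν U n) := by
    intro n
    induction n with
    | zero => exact hU_meas
    | succ n ih =>
      exact (hU_meas.div measurable_const).max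
        ((fortetPhi_meas hp_meas ih).min hU_meas)
  have hΨmeas : ∀ n, Measurable (fortetPsi p μ (fortetSeq p μ ν U n)) := fun n =>
    fortetPsi_meas hp_meas (humeas n)
  have hΨUmeas : Measurable (fortetPsi p μ U) := fortetPsi_meas hp_meas hU_meas
  -- pointwise bounds on the scheme
  have hle : ∀ n x, fortetSeq p μ ν U n x ≤ U x := by
    intro n x
    cases n with
    | zero => exact le_rfl
    | succ n =>
      refine max_le (ENNReal.div_le_of_le_mul' ?_) (min_le_right _ _)
      exact le_mul_of_one_le_left zero_le (by
        have : (1:ℝ≥0∞) ≤ 2 := one_le_two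
        calc (1:ℝ≥0∞) ≤ 2 := this
          _ ≤ (n:ℝ≥0∞) + 2 := le_add_self)
  have hΨle : ∀ n y, fortetPsi p μ U y ≤ fortetPsi p μ (fortetSeq p μ ν U n) y := by
    intro n y
    exact lintegral_mono fun x => mul_le_mul_right (ENNReal.inv_le_inv' (hle n x)) _
  have hΨzero : ∀ n y, fortetPsi p μ U y = 0 →
      fortetPsi p μ (fortetSeq p μ ν U n) y = 0 := by
    intro n y h0
    rw [fortetPsi, lintegral_eq_zero_iff (f := fun x => p x y * (U x)⁻¹) ((hpy y).mul hU_meas.inv)] at h0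
    rw [fortetPsi, lintegral_eq_zero_iff (f := fun x => p x y * (fortetSeq p μ ν U n x)⁻¹) ((hpy y).mul (humeas n).inv)]
    filter_upwards [h0] with x hx
    have hp0 : p x y = 0 := by
      by_contra h
      have hinv : (U x)⁻¹ ≠ 0 := ENNReal.inv_ne_zero.mpr (hU_fin x)
      simp only [Pi.zero_apply, mul_eq_zero] at hx
      tauto
    simp [hp0]
  -- finiteness of the dominating integral
  have hbound_fin : ∫⁻ y, p x₀ y * (fortetPsi p μ U y)⁻¹ ∂ν ≠ ∞ := by
    have heq : ∫⁻ y, p x₀ y * (fortetPsi p μ U y)⁻¹ ∂ν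
        = ∫⁻ y, (p x₀ y / p x₀ y) ^ r * (p x₀ y * (fortetPsi p μ U y)⁻¹) ∂ν := by
      apply lintegral_congr_ae
      filter_upwards [hx₀_pos] with y hy
      rw [ENNReal.div_self hy.ne' (hp_fin x₀ y), ENNReal.one_rpow, one_mul]
    rw [heq]
    exact ne_top_of_le_ne_top
      (ENNReal.mul_ne_top hc_fin (ENNReal.rpow_ne_top_of_nonneg hr0.le (hU_fin x₀)))
      (hHolder x₀)
  -- convergence of Φ[u_n](x₀) to 0
  have hΦ0 : Tendsto (fun n => fortetPhi p μ ν (fortetSeq p μ ν U n) x₀) atTop (𝓝 0) := by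
    have hlimsup :
        limsup (fun n => fortetPhi p μ ν (fortetSeq p μ ν U n) x₀) atTop = 0 := by
      apply le_antisymm _ zero_le
      have h1 : limsup (fun n => fortetPhi p μ ν (fortetSeq p μ ν U n) x₀) atTop ≤
          ∫⁻ y, limsup (fun n => p x₀ y *
            (fortetPsi p μ (fortetSeq p μ ν U n) y)⁻¹) atTop ∂ν := by
        refine limsup_lintegral_le (fun y => p x₀ y * (fortetPsi p μ U y)⁻¹)
          (fun n => (hpx x₀).mul (hΨmeas n).inv)
          (fun n => ae_of_all _ fun y =>
            mul_le_mul_right (ENNReal.inv_le_inv' (hΨle n y)) _) hbound_fin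
      refine h1.trans ?_
      have h2 : ∫⁻ y, limsup (fun n => p x₀ y *
            (fortetPsi p μ (fortetSeq p μ ν U n) y)⁻¹) atTop ∂ν ≤
          ∫⁻ y, p x₀ y * (fortetPsi p μ ustar y)⁻¹ ∂ν := by
        refine lintegral_mono fun y => ?_
        rw [ENNReal.limsup_const_mul_of_ne_top (hp_fin x₀ y)]
        refine mul_le_mul_right ?_ _
        rw [← ENNReal.inv_liminf]
        refine ENNReal.inv_le_inv' ?_
        -- Fatou: Ψ[ustar] ≤ liminf Ψ[u_n]
        calc fortetPsi p μ ustar y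
            = ∫⁻ x, liminf (fun n => p x y * (fortetSeq p μ ν U n x)⁻¹) atTop ∂μ := by
              refine lintegral_congr fun x => ?_
              have htend : Tendsto (fun n => p x y * (fortetSeq p μ ν U n x)⁻¹)
                  atTop (𝓝 (p x y * (ustar x)⁻¹)) :=
                ENNReal.Tendsto.const_mul (hustar x).inv (Or.inr (hp_fin x y))
              exact htend.liminf_eq.symm
          _ ≤ liminf (fun n => fortetPsi p μ (fortetSeq p μ ν U n) y) atTop :=
              lintegral_liminf_le (fun n => (hpy y).mul (humeas n).inv)
      exact h2.trans (le_of_eq hx₀)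
    have hliminf :
        liminf (fun n => fortetPhi p μ ν (fortetSeq p μ ν U n) x₀) atTop = 0 :=
      le_antisymm (hlimsup ▸ liminf_le_limsup) zero_le
    exact tendsto_of_liminf_eq_limsup hliminf hlimsup
  -- key Hölder bound
  have hkey : ∀ n x, fortetPhi p μ ν (fortetSeq p μ ν U n) x
      ≤ (c ^ (1/r) * (fortetPhi p μ ν (fortetSeq p μ ν U n) x₀) ^ (1/q)) * U x := by
    intro n x
    set Ψn : Y → ℝ≥0∞ := fortetPsi p μ (fortetSeq p μ ν U n) with hΨn_def
    set ΨU : Y → ℝ≥0∞ := fortetPsi p μ U with hΨU_def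
    set w : Y → ℝ≥0∞ := fun y => p x₀ y * (ΨU y)⁻¹ with hw_def
    set f : Y → ℝ≥0∞ := fun y => p x y / p x₀ y with hf_def
    set g : Y → ℝ≥0∞ := fun y => if ΨU y = 0 then 1 else ΨU y * (Ψn y)⁻¹ with hg_def
    have hwmeas : Measurable w := (hpx x₀).mul hΨUmeas.inv
    have hfmeas : Measurable f := (hpx x).div (hpx x₀)
    have hgmeas : Measurable g :=
      Measurable.ite (hΨUmeas (measurableSet_singleton 0)) measurable_const
        (hΨUmeas.mul (hΨmeas n).inv)
    have hg_le_one : ∀ y, g y ≤ 1 := by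
      intro y
      by_cases h0 : ΨU y = 0
      · simp [hg_def, h0]
      · simp only [hg_def, if_neg h0]
        calc ΨU y * (Ψn y)⁻¹ ≤ Ψn y * (Ψn y)⁻¹ := mul_le_mul_left (hΨle n y) _
          _ ≤ 1 := ENNReal.mul_inv_le_one _
    -- pointwise comparison for the Hölder step
    have hA : ∀ᵐ y ∂ν, p x y * (Ψn y)⁻¹ ≤ w y * (f y * g y) := by
      filter_upwards [hx₀_pos] with y hy
      have hy' : p x₀ y ≠ 0 := hy.ne'
      have hyt : p x₀ y ≠ ∞ := hp_fin x₀ y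
      rcases eq_or_ne (ΨU y) 0 with h0 | h0
      · have hn0 : Ψn y = 0 := hΨzero n y h0
        rcases eq_or_ne (p x y) 0 with hp0 | hp0
        · simp [hp0]
        · have hwtop : w y = ∞ := by
            simp [hw_def, h0, ENNReal.mul_top hy']
          rw [hwtop]
          have hf0 : f y ≠ 0 := by
            simp only [hf_def, ne_eq, ENNReal.div_eq_zero_iff, not_or]
            exact ⟨hp0, hyt⟩
          have hg0 : g y ≠ 0 := by simp [hg_def, h0]
          rw [ENNReal.top_mul (mul_ne_zero hf0 hg0)]
          exact le_top
      · rcases eq_or_ne (ΨU y) ∞ with ht | ht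
        · have hnt : Ψn y = ∞ := top_le_iff.mp (ht ▸ hΨle n y)
          simp [hnt]
        · have hn0 : Ψn y ≠ 0 := fun h =>
            h0 (le_antisymm (le_of_le_of_eq (hΨle n y) h) zero_le)
          have hcalc : w y * (f y * g y) = (p x y * (Ψn y)⁻¹) *
              ((p x₀ y * (p x₀ y)⁻¹) * ((ΨU y)⁻¹ * ΨU y)) := by
            simp only [hw_def, hf_def, hg_def, if_neg h0, div_eq_mul_inv]
            ring
          rw [hcalc, ENNReal.mul_inv_cancel hy' hyt, ENNReal.inv_mul_cancel h0 ht,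
            one_mul, mul_one]
    -- step A: Φ[u_n](x) ≤ ∫ f·g dλ where λ = ν.withDensity w
    have hstepA : fortetPhi p μ ν (fortetSeq p μ ν U n) x
        ≤ ∫⁻ y, (f * g) y ∂(ν.withDensity w) := by
      simp only [Pi.mul_apply]
      rw [lintegral_withDensity_eq_lintegral_mul ν hwmeas (g := fun y => f y * g y) (hfmeas.mul hgmeas)]
      simp only [Pi.mul_apply]
      exact lintegral_mono_ae hA
    -- step B: Hölder's inequality
    have hB := ENNReal.lintegral_mul_le_Lp_mul_Lq (ν.withDensity w) hpq
      hfmeas.aemeasurable hgmeas.aemeasurable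
    -- step C: first factor
    have hC : ∫⁻ y, f y ^ r ∂(ν.withDensity w) ≤ c * U x ^ r := by
      rw [lintegral_withDensity_eq_lintegral_mul ν hwmeas (hfmeas.pow_const r)]
      calc ∫⁻ y, (w * fun y => f y ^ r) y ∂ν
          = ∫⁻ y, (p x y / p x₀ y) ^ r * (p x₀ y * (ΨU y)⁻¹) ∂ν :=
            lintegral_congr fun y => mul_comm _ _
        _ ≤ c * U x ^ r := hHolder x
    -- step D: second factor
    have hD : ∫⁻ y, g y ^ q ∂(ν.withDensity w)
        ≤ fortetPhi p μ ν (fortetSeq p μ ν U n) x₀ := by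
      have h1 : ∫⁻ y, g y ^ q ∂(ν.withDensity w)
          ≤ ∫⁻ y, g y ∂(ν.withDensity w) := by
        refine lintegral_mono fun y => ?_
        calc g y ^ q ≤ g y ^ (1:ℝ) :=
            ENNReal.rpow_le_rpow_of_exponent_ge (hg_le_one y) hq1.le
          _ = g y := ENNReal.rpow_one _
      refine h1.trans ?_
      rw [lintegral_withDensity_eq_lintegral_mul ν hwmeas hgmeas]
      refine lintegral_mono_ae ?_
      filter_upwards [hx₀_pos] with y hy
      have hy' : p x₀ y ≠ 0 := hy.ne'
      have hyt : p x₀ y ≠ ∞ := hp_fin x₀ y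
      show w y * g y ≤ p x₀ y * (Ψn y)⁻¹
      rcases eq_or_ne (ΨU y) 0 with h0 | h0
      · have hn0 : Ψn y = 0 := hΨzero n y h0
        rw [hn0]
        simp [ENNReal.mul_top hy']
      · rcases eq_or_ne (ΨU y) ∞ with ht | ht
        · simp [hw_def, ht]
        · have hcalc : w y * g y = (p x₀ y * (Ψn y)⁻¹) * ((ΨU y)⁻¹ * ΨU y) := by
            simp only [hw_def, hg_def, if_neg h0]
            ring
          rw [hcalc, ENNReal.inv_mul_cancel h0 ht, mul_one]
    -- combine
    calc fortetPhi p μ ν (fortetSeq p μ ν U n) x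
        ≤ ∫⁻ y, (f * g) y ∂(ν.withDensity w) := hstepA
      _ ≤ (∫⁻ y, f y ^ r ∂(ν.withDensity w)) ^ (1/r) *
          (∫⁻ y, g y ^ q ∂(ν.withDensity w)) ^ (1/q) := hB
      _ ≤ (c * U x ^ r) ^ (1/r) *
          (fortetPhi p μ ν (fortetSeq p μ ν U n) x₀) ^ (1/q) :=
          mul_le_mul' (ENNReal.rpow_le_rpow hC (by positivity))
            (ENNReal.rpow_le_rpow hD (by positivity))
      _ = (c ^ (1/r) * (fortetPhi p μ ν (fortetSeq p μ ν U n) x₀) ^ (1/q)) * U x := by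
          rw [ENNReal.mul_rpow_of_nonneg _ _ (by positivity : (0:ℝ) ≤ 1/r),
            ← ENNReal.rpow_mul, mul_one_div, div_self hr0.ne', ENNReal.rpow_one]
          ring
  -- conclusion
  have hsup : ∀ n, (⨆ x, fortetPhi p μ ν (fortetSeq p μ ν U n) x / U x)
      ≤ c ^ (1/r) * (fortetPhi p μ ν (fortetSeq p μ ν U n) x₀) ^ (1/q) := fun n =>
    iSup_le fun x => (ENNReal.div_le_iff (hU_pos x).ne' (hU_fin x)).mpr (hkey n x)
  have hK : Tendsto (fun n => c ^ (1/r) *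
      (fortetPhi p μ ν (fortetSeq p μ ν U n) x₀) ^ (1/q)) atTop (𝓝 0) := by
    have h1 : Tendsto (fun n => (fortetPhi p μ ν (fortetSeq p μ ν U n) x₀) ^ (1/q))
        atTop (𝓝 ((0:ℝ≥0∞) ^ (1/q))) :=
      (ENNReal.continuous_rpow_const.tendsto 0).comp hΦ0
    rw [ENNReal.zero_rpow_of_pos (by positivity)] at h1
    have h2 := ENNReal.Tendsto.const_mul h1
      (Or.inr (ENNReal.rpow_ne_top_of_nonneg (by positivity) hc_fin : c ^ (1/r) ≠ ⊤))
    rwa [mul_zero] at h2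
  exact tendsto_of_tendsto_of_tendsto_of_le_of_le tendsto_const_nhds hK
    (fun n => zero_le) hsup

end
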